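/- Let λ ∈ ℝ, λ ≠ 0, and define F : ℝ² → ℂ by F(p₀,p₁) = λ⁻¹sinh(λp₀) + (λ/2)p₁²e^{−λp₀} + i·e^{−λp₀}p₁ (that is, F = r·e^{iθ} in the deformed polar coordinates of the quantum Euclidean group). Then F satisfies the first-order PDE expressing that it is an eigenfunction of the boost vector field χ(N): for all (p₀,p₁) ∈ ℝ², p₁·∂F/∂p₀(p₀,p₁) + ((1−e^{2λp₀})/(2λ) + (λ/2)p₁²)·∂F/∂p₁(p₀,p₁) = −i·F(p₀,p₁). Equivalently, [χ(N), F] = F where χ(N) = i p₁∂_{p₀} + i((1−e^{2λp₀})/(2λ) + (λ/2)p₁²)∂_{p₁}. -/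

import Mathlib

/-- The function `F = re^{iθ}` in the deformed polar coordinates of the quantum
Euclidean group: `F(p₀,p₁) = λ⁻¹sinh(λp₀) + (λ/2)p₁²e^{−λp₀} + i·e^{−λp₀}p₁`. -/
noncomputable def Fsym (l : ℝ) (p : ℝ × ℝ) : ℂ :=
  ((l⁻¹ * Real.sinh (l * p.1) + l / 2 * p.2 ^ 2 * Real.exp (-(l * p.1)) : ℝ) : ℂ) +
    Complex.I * ((Real.exp (-(l * p.1)) * p.2 : ℝ) : ℂ)

/-- `F = re^{iθ}` is an eigenfunction of the boost vector field `χ(N)`: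
`p₁∂₀F + ((1−e^{2λp₀})/(2λ) + (λ/2)p₁²)∂₁F = −iF`, i.e. `[χ(N), F] = F`. -/
theorem boost_eigenfunction (l : ℝ) (hl : l ≠ 0) (p : ℝ × ℝ) :
    ((p.2 : ℝ) : ℂ) * fderiv ℝ (Fsym l) p (1, 0) +
      (((1 - Real.exp (2 * l * p.1)) / (2 * l) + l / 2 * p.2 ^ 2 : ℝ) : ℂ) *
        fderiv ℝ (Fsym l) p (0, 1) =
      -Complex.I * Fsym l p := by
  obtain ⟨a, b⟩ := p
  simp only
  have hco : Differentiable ℝ ((↑) : ℝ → ℂ) := Complex.ofRealCLM.differentiable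
  have hA : Differentiable ℝ (fun p : ℝ × ℝ =>
      l⁻¹ * Real.sinh (l * p.1) + l / 2 * p.2 ^ 2 * Real.exp (-(l * p.1))) := by fun_prop
  have hB : Differentiable ℝ (fun p : ℝ × ℝ => Real.exp (-(l * p.1)) * p.2) := by fun_prop
  have hdiff : DifferentiableAt ℝ (Fsym l) (a, b) :=
    (((hco.comp hA).add ((hco.comp hB).const_mul Complex.I)).differentiableAt)
  -- one-variable building blocks
  have hlt : HasDerivAt (fun t : ℝ => l * t) l a := by
    simpa using (hasDerivAt_id a).const_mul l
  have hexp : HasDerivAt (fun t : ℝ => Real.exp (-(l * t)))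
      (Real.exp (-(l * a)) * -l) a := hlt.neg.exp
  have hsinh : HasDerivAt (fun t : ℝ => Real.sinh (l * t))
      (Real.cosh (l * a) * l) a := hlt.sinh
  -- slice in the first variable
  have hA0 : HasDerivAt (fun t : ℝ => l⁻¹ * Real.sinh (l * t) + l / 2 * b ^ 2 * Real.exp (-(l * t)))
      (l⁻¹ * (Real.cosh (l * a) * l) + l / 2 * b ^ 2 * (Real.exp (-(l * a)) * -l)) a :=
    (hsinh.const_mul l⁻¹).add (hexp.const_mul (l / 2 * b ^ 2))
  have hB0 : HasDerivAt (fun t : ℝ => Real.exp (-(l * t)) * b)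
      (Real.exp (-(l * a)) * -l * b) a := hexp.mul_const b
  have hs0 : HasDerivAt (fun t : ℝ => Fsym l (t, b))
      (Complex.ofReal (l⁻¹ * (Real.cosh (l * a) * l) + l / 2 * b ^ 2 * (Real.exp (-(l * a)) * -l))
        + Complex.I * Complex.ofReal (Real.exp (-(l * a)) * -l * b)) a :=
    (hA0.ofReal_comp).add ((hB0.ofReal_comp).const_mul Complex.I)
  -- slice in the second variable
  have hA1 : HasDerivAt (fun t : ℝ => l⁻¹ * Real.sinh (l * a) + l / 2 * t ^ 2 * Real.exp (-(l * a)))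
      (l / 2 * (2 * b ^ 1) * Real.exp (-(l * a))) b :=
    ((((hasDerivAt_pow 2 b).const_mul (l / 2)).mul_const (Real.exp (-(l * a)))).const_add _)
  have hB1 : HasDerivAt (fun t : ℝ => Real.exp (-(l * a)) * t) (Real.exp (-(l * a))) b := by
    simpa using (hasDerivAt_id b).const_mul (Real.exp (-(l * a)))
  have hs1 : HasDerivAt (fun t : ℝ => Fsym l (a, t))
      (Complex.ofReal (l / 2 * (2 * b ^ 1) * Real.exp (-(l * a)))
        + Complex.I * Complex.ofReal (Real.exp (-(l * a)))) b :=
    (hA1.ofReal_comp).add ((hB1.ofReal_comp).const_mul Complex.I)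
  -- relate fderiv directional values with the slice derivatives
  have hline0 : HasDerivAt (fun t : ℝ => (t, b)) ((1 : ℝ), (0 : ℝ)) a :=
    (hasDerivAt_id a).prodMk (hasDerivAt_const a b)
  have hline1 : HasDerivAt (fun t : ℝ => (a, t)) ((0 : ℝ), (1 : ℝ)) b :=
    (hasDerivAt_const b a).prodMk (hasDerivAt_id b)
  have h0 : fderiv ℝ (Fsym l) (a, b) (1, 0)
      = Complex.ofReal (l⁻¹ * (Real.cosh (l * a) * l) + l / 2 * b ^ 2 * (Real.exp (-(l * a)) * -l))
        + Complex.I * Complex.ofReal (Real.exp (-(l * a)) * -l * b) :=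
    by have := hdiff.hasFDerivAt.comp_hasDerivAt a hline0; exact this.unique hs0
  have h1 : fderiv ℝ (Fsym l) (a, b) (0, 1)
      = Complex.ofReal (l / 2 * (2 * b ^ 1) * Real.exp (-(l * a)))
        + Complex.I * Complex.ofReal (Real.exp (-(l * a))) :=
    (hdiff.hasFDerivAt.comp_hasDerivAt b hline1).unique hs1
  rw [h0, h1]
  have he : Real.exp (2 * l * a) = Real.exp (l * a) * Real.exp (l * a) := by
    rw [← Real.exp_add]; ring_nf
  have hne : Real.exp (-(l * a)) = (Real.exp (l * a))⁻¹ := Real.exp_neg _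
  have hpos : Real.exp (l * a) ≠ 0 := (Real.exp_pos _).ne'
  simp only [Fsym, Complex.ext_iff, Complex.add_re, Complex.add_im, Complex.mul_re,
    Complex.mul_im, Complex.I_re, Complex.I_im, Complex.ofReal_re, Complex.ofReal_im,
    Complex.neg_re, Complex.neg_im, Real.sinh_eq, Real.cosh_eq, he, hne]
  constructor <;> (field_simp; ring)
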